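/- The worst-case approximation ratio (over all n and m) of the weighted k-sortition rule is at least 3/2 − (1/2)(3/4)^k ≥ 9/8 for every committee size k ≥ 1. -/

import Mathlib

open Finset BigOperators

noncomputable section

/-- Hamming distance between two preference vectors over `m` binary issues. -/
def hamming {m : ℕ} (x y : Fin m → Bool) : ℕ :=
  (Finset.univ.filter fun j => x j ≠ y j).card

/-- Social cost of outcome `z` on profile `X`: sum of Hamming distances. -/
def SC {n m : ℕ} (X : Fin n → Fin m → Bool) (z : Fin m → Bool) : ℕ :=
  ∑ i, hamming (X i) z

/-- Optimal (minimal) social cost over all outcomes. -/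
def optCost {n m : ℕ} (X : Fin n → Fin m → Bool) : ℕ :=
  Finset.univ.inf' Finset.univ_nonempty fun z : Fin m → Bool => SC X z

/-- Number of voters preferring alternative 1 (`true`) on issue `j`. -/
def trueCount {n m : ℕ} (X : Fin n → Fin m → Bool) (j : Fin m) : ℕ :=
  (Finset.univ.filter fun i => X i j = true).card

/-- Number of voters preferring alternative 0 (`false`) on issue `j`. -/
def falseCount {n m : ℕ} (X : Fin n → Fin m → Bool) (j : Fin m) : ℕ :=
  (Finset.univ.filter fun i => X i j = false).card

/-- Expected social cost of `k`-sortition: a uniformly random committee of size `k`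
decides each issue by simple majority, ties broken uniformly at random. -/
def sortitionCost (k : ℕ) {n m : ℕ} (X : Fin n → Fin m → Bool) : ℝ :=
  (∑ C ∈ Finset.powersetCard k (Finset.univ : Finset (Fin n)), ∑ j : Fin m,
      (if k < 2 * (C.filter fun i => X i j = true).card then (falseCount X j : ℝ)
       else if 2 * (C.filter fun i => X i j = true).card < k then (trueCount X j : ℝ)
       else (n : ℝ) / 2)) / (n.choose k : ℝ)

/-- Ratio of an (expected) cost to the optimal cost, with the convention `0/0 = 1`. -/
def ratio (cost : ℝ) (opt : ℕ) : ℝ := if opt = 0 then 1 else cost / (opt : ℝ)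

/-- Worst-case approximation ratio of `k`-sortition over profiles with `n` voters, `m` issues. -/
def sortitionAR (n m k : ℕ) : ℝ :=
  ⨆ X : Fin n → Fin m → Bool, ratio (sortitionCost k X) (optCost X)

/-- The set of committee members of `C` closest (in Hamming distance) to voter `i`. -/
def closestSet {n m : ℕ} (X : Fin n → Fin m → Bool) (C : Finset (Fin n)) (i : Fin n) :
    Finset (Fin n) :=
  C.filter fun c => ∀ c' ∈ C, hamming (X i) (X c) ≤ hamming (X i) (X c')

/-- Weight of committee member `c`: each voter splits one unit of weight equally among
their closest committee members. -/
def wWeight {n m : ℕ} (X : Fin n → Fin m → Bool) (C : Finset (Fin n)) (c : Fin n) : ℝ :=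
  ∑ i : Fin n, if c ∈ closestSet X C i then 1 / ((closestSet X C i).card : ℝ) else 0

/-- Expected social cost of the decision of committee `C` under weighted majority
(per issue, ties broken uniformly). -/
def wCost {n m : ℕ} (X : Fin n → Fin m → Bool) (C : Finset (Fin n)) : ℝ :=
  ∑ j : Fin m,
    (if (∑ c ∈ C.filter (fun c => X c j = false), wWeight X C c)
          < (∑ c ∈ C.filter (fun c => X c j = true), wWeight X C c)
        then (falseCount X j : ℝ)
     else if (∑ c ∈ C.filter (fun c => X c j = true), wWeight X C c)
          < (∑ c ∈ C.filter (fun c => X c j = false), wWeight X C c)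
        then (trueCount X j : ℝ)
     else (n : ℝ) / 2)

/-- Expected social cost of weighted `k`-sortition: uniformly random committee of size `k`,
weighted majority vote per issue. -/
def wSortitionCost (k : ℕ) {n m : ℕ} (X : Fin n → Fin m → Bool) : ℝ :=
  (∑ C ∈ Finset.powersetCard k (Finset.univ : Finset (Fin n)), wCost X C) / (n.choose k : ℝ)

/-- Worst-case approximation ratio of weighted `k`-sortition. -/
def wSortitionAR (n m k : ℕ) : ℝ :=
  ⨆ X : Fin n → Fin m → Bool, ratio (wSortitionCost k X) (optCost X)



def XXn (s b i j : ℕ) : Bool :=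
  if i < 3*s then decide (j/b = i) else decide (3*s*b ≤ j)

-- card over Fin via range
lemma card_filter_fin (m : ℕ) (p : ℕ → Prop) [DecidablePred p] :
    ((Finset.univ : Finset (Fin m)).filter (fun j => p j.val)).card
      = ((Finset.range m).filter p).card := by
  rw [Finset.card_filter, Finset.card_filter,
    Fin.sum_univ_eq_sum_range (fun j => if p j then 1 else 0)]

lemma filt_block {s b : ℕ} (hb : 0 < b) {i : ℕ} (hi : i < 3*s) :
    ((Finset.range (3*s*b+(b-1))).filter (fun j => j / b = i)) = Finset.Ico (i*b) (i*b + b) := by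
  ext j
  simp only [mem_filter, mem_range, Finset.mem_Ico]
  constructor
  · rintro ⟨hj, rfl⟩
    refine ⟨Nat.div_mul_le_self j b, ?_⟩
    have := (Nat.div_lt_iff_lt_mul hb).mp (Nat.lt_succ_self (j/b))
    calc j < (j/b+1)*b := this
    _ = j/b*b + b := by ring
  · rintro ⟨h1, h2⟩
    have hd : j / b = i := Nat.div_eq_of_lt_le h1 (by calc j < i*b+b := h2
      _ = (i+1)*b := by ring)
    refine ⟨?_, hd⟩
    have : i*b + b = (i+1)*b := by ring
    have h3 : (i+1)*b ≤ 3*s*b := Nat.mul_le_mul_right b (by omega)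
    omega

lemma filt_D {s b : ℕ} :
    ((Finset.range (3*s*b+(b-1))).filter (fun j => 3*s*b ≤ j)) = Finset.Ico (3*s*b) (3*s*b+(b-1)) := by
  ext j; simp only [mem_filter, mem_range, Finset.mem_Ico]; omega


def XX (s b : ℕ) : Fin (4*s) → Fin (3*s*b+(b-1)) → Bool := fun i j => XXn s b i.val j.val

lemma hamming_XX (s b : ℕ) (i i' : Fin (4*s)) :
    hamming (XX s b i) (XX s b i')
      = ((Finset.range (3*s*b+(b-1))).filter
          (fun j => XXn s b i.val j ≠ XXn s b i'.val j)).card := by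
  unfold hamming XX
  rw [Finset.card_filter, Finset.card_filter]
  exact Fin.sum_univ_eq_sum_range (fun j => if XXn s b i.val j ≠ XXn s b i'.val j then 1 else 0) _

lemma hamming_self {m : ℕ} (x : Fin m → Bool) : hamming x x = 0 := by
  simp [hamming]

lemma hamming_PP {s b : ℕ} (hb : 0 < b) (i i' : Fin (4*s))
    (hi : i.val < 3*s) (hi' : i'.val < 3*s) (hne : i ≠ i') :
    hamming (XX s b i) (XX s b i') = 2*b := by
  have hne' : i.val ≠ i'.val := fun h => hne (Fin.ext h)
  rw [hamming_XX]
  have h1 : ((Finset.range (3*s*b+(b-1))).filter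
      (fun j => XXn s b i.val j ≠ XXn s b i'.val j))
      = ((Finset.range (3*s*b+(b-1))).filter (fun j => j/b = i.val))
        ∪ ((Finset.range (3*s*b+(b-1))).filter (fun j => j/b = i'.val)) := by
    rw [← Finset.filter_or]
    refine Finset.filter_congr fun j _ => ?_
    simp only [XXn, if_pos hi, if_pos hi', ne_eq, decide_eq_decide, eq_iff_iff]
    generalize j / b = t
    omega
  rw [h1, Finset.card_union_of_disjoint, filt_block hb hi, filt_block hb hi',
    Nat.card_Ico, Nat.card_Ico]
  · omega
  · rw [Finset.disjoint_left]
    intro a ha ha'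
    simp only [mem_filter] at ha ha'
    omega

lemma hamming_PQ {s b : ℕ} (hb : 0 < b) (i i' : Fin (4*s))
    (hi : i.val < 3*s) (hi' : 3*s ≤ i'.val) :
    hamming (XX s b i) (XX s b i') = 2*b - 1 := by
  rw [hamming_XX]
  have key : ∀ j, 3*s*b ≤ j → j / b ≠ i.val := by
    intro j hj h
    have : 3*s ≤ j / b := (Nat.le_div_iff_mul_le hb).mpr hj
    omega
  have h1 : ((Finset.range (3*s*b+(b-1))).filter
      (fun j => XXn s b i.val j ≠ XXn s b i'.val j))
      = ((Finset.range (3*s*b+(b-1))).filter (fun j => j/b = i.val))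
        ∪ ((Finset.range (3*s*b+(b-1))).filter (fun j => 3*s*b ≤ j)) := by
    rw [← Finset.filter_or]
    refine Finset.filter_congr fun j _ => ?_
    simp only [XXn, if_pos hi, if_neg (by omega : ¬ (i'.val < 3*s)), ne_eq,
      decide_eq_decide]
    have := key j
    tauto
  rw [h1, Finset.card_union_of_disjoint, filt_block hb hi, filt_D,
    Nat.card_Ico, Nat.card_Ico]
  · generalize i.val*b = A
    generalize 3*s*b = B
    omega
  · rw [Finset.disjoint_left]
    intro a ha ha'
    simp only [mem_filter] at ha ha'
    exact key a ha'.2 ha.2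

lemma hamming_QQ {s b : ℕ} (i i' : Fin (4*s))
    (hi : 3*s ≤ i.val) (hi' : 3*s ≤ i'.val) :
    hamming (XX s b i) (XX s b i') = 0 := by
  rw [hamming_XX]
  simp only [Finset.card_eq_zero, Finset.filter_eq_empty_iff]
  intro j _
  simp [XXn, if_neg (by omega : ¬ (i.val < 3*s)), if_neg (by omega : ¬ (i'.val < 3*s))]

lemma hamming_comm {m : ℕ} (x y : Fin m → Bool) : hamming x y = hamming y x := by
  unfold hamming
  congr 1
  exact Finset.filter_congr fun j _ => by tauto


lemma trueCount_XX (s b : ℕ) (j : Fin (3*s*b+(b-1))) :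
    trueCount (XX s b) j
      = ((Finset.range (4*s)).filter (fun i => XXn s b i j.val = true)).card := by
  unfold trueCount XX
  rw [Finset.card_filter, Finset.card_filter]
  exact Fin.sum_univ_eq_sum_range (fun i => if XXn s b i j.val = true then 1 else 0) _

lemma count_add {n m : ℕ} (X : Fin n → Fin m → Bool) (j : Fin m) :
    trueCount X j + falseCount X j = n := by
  unfold trueCount falseCount
  have h := Finset.card_filter_add_card_filter_not
    (s := (Finset.univ : Finset (Fin n))) (p := fun i => X i j = true)
  simp only [Bool.not_eq_true] at h
  simpa using h

lemma trueCount_B {s b : ℕ} (hb : 0 < b) (j : Fin (3*s*b+(b-1))) (hj : j.val < 3*s*b) :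
    trueCount (XX s b) j = 1 := by
  rw [trueCount_XX]
  have ht : j.val / b < 3*s := (Nat.div_lt_iff_lt_mul hb).mpr hj
  have h1 : (Finset.range (4*s)).filter (fun i => XXn s b i j.val = true) = {j.val / b} := by
    ext i
    rw [Finset.mem_filter]
    simp only [Finset.mem_filter, Finset.mem_range, Finset.mem_singleton, XXn]
    constructor
    · rintro ⟨hi, hx⟩
      by_cases h3 : i < 3*s
      · rw [if_pos h3] at hx; simpa using (decide_eq_true_eq.mp hx).symm
      · rw [if_neg h3] at hx; simp only [decide_eq_true_eq] at hx; omega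
    · rintro rfl
      refine ⟨by omega, ?_⟩
      rw [if_pos ht]; simp
  rw [h1, Finset.card_singleton]

lemma trueCount_D {s b : ℕ} (hb : 0 < b) (j : Fin (3*s*b+(b-1))) (hj : 3*s*b ≤ j.val) :
    trueCount (XX s b) j = s := by
  rw [trueCount_XX]
  have ht : 3*s ≤ j.val / b := (Nat.le_div_iff_mul_le hb).mpr hj
  have h1 : (Finset.range (4*s)).filter (fun i => XXn s b i j.val = true)
      = Finset.Ico (3*s) (4*s) := by
    ext i
    rw [Finset.mem_filter]
    simp only [Finset.mem_filter, Finset.mem_range, Finset.mem_Ico, XXn]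
    constructor
    · rintro ⟨hi, hx⟩
      by_cases h3 : i < 3*s
      · rw [if_pos h3] at hx; simp only [decide_eq_true_eq] at hx; omega
      · omega
    · rintro ⟨h3, h4⟩
      refine ⟨h4, ?_⟩
      rw [if_neg (by omega)]; simpa using hj
  rw [h1, Nat.card_Ico]
  omega

lemma falseCount_B {s b : ℕ} (hb : 0 < b) (j : Fin (3*s*b+(b-1))) (hj : j.val < 3*s*b) :
    falseCount (XX s b) j = 4*s - 1 := by
  have := count_add (XX s b) j
  rw [trueCount_B hb j hj] at this
  omega

lemma falseCount_D {s b : ℕ} (hb : 0 < b) (j : Fin (3*s*b+(b-1))) (hj : 3*s*b ≤ j.val) :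
    falseCount (XX s b) j = 3*s := by
  have := count_add (XX s b) j
  rw [trueCount_D hb j hj] at this
  omega


lemma SC_decomp {n m : ℕ} (X : Fin n → Fin m → Bool) (z : Fin m → Bool) :
    SC X z = ∑ j, (if z j then falseCount X j else trueCount X j) := by
  unfold SC hamming
  simp_rw [Finset.card_filter]
  rw [Finset.sum_comm]
  refine Finset.sum_congr rfl fun j _ => ?_
  by_cases hz : z j = true
  · rw [if_pos hz]
    unfold falseCount
    rw [Finset.card_filter]
    refine Finset.sum_congr rfl fun i _ => ?_
    simp [hz, Bool.not_eq_true]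
  · rw [if_neg hz]
    unfold trueCount
    rw [Finset.card_filter]
    refine Finset.sum_congr rfl fun i _ => ?_
    have hz' : z j = false := by simpa using hz
    simp [hz']
  
lemma sum_split {s b : ℕ} {M : Type*} [AddCommMonoid M] (a c : M) :
    ∑ j : Fin (3*s*b+(b-1)), (if j.val < 3*s*b then a else c) = (3*s*b) • a + (b-1) • c := by
  rw [Finset.sum_ite, Finset.sum_const, Finset.sum_const]
  congr 2
  · rw [card_filter_fin _ (fun x => x < 3*s*b)]
    have h : (Finset.range (3*s*b+(b-1))).filter (fun x => x < 3*s*b)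
        = Finset.range (3*s*b) := by
      ext x; simp only [Finset.mem_filter, Finset.mem_range]; omega
    rw [h, Finset.card_range]
  · rw [card_filter_fin _ (fun x => ¬ x < 3*s*b)]
    have h : (Finset.range (3*s*b+(b-1))).filter (fun x => ¬ x < 3*s*b)
        = Finset.Ico (3*s*b) (3*s*b+(b-1)) := by
      ext x; simp only [Finset.mem_filter, Finset.mem_range, Finset.mem_Ico]; omega
    rw [h, Nat.card_Ico]
    omega

lemma optCost_XX {s b : ℕ} (hb : 0 < b) (hs : 0 < s) :
    optCost (XX s b) = 3*s*b + (b-1)*s := by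
  apply le_antisymm
  · have h : optCost (XX s b) ≤ SC (XX s b) (fun _ => false) :=
      Finset.inf'_le _ (Finset.mem_univ _)
    refine le_trans h (le_of_eq ?_)
    rw [SC_decomp]
    have h2 : ∀ j : Fin (3*s*b+(b-1)),
        (if (false : Bool) then falseCount (XX s b) j else trueCount (XX s b) j)
          = (if j.val < 3*s*b then 1 else s) := by
      intro j
      simp only [Bool.false_eq_true, if_false]
      by_cases hj : j.val < 3*s*b
      · rw [if_pos hj, trueCount_B hb j hj]
      · rw [if_neg hj, trueCount_D hb j (by omega)]
    rw [Finset.sum_congr rfl (fun j _ => h2 j), sum_split]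
    simp [mul_comm]
  · apply Finset.le_inf'
    intro z _
    rw [SC_decomp]
    have h2 : (3*s*b + (b-1)*s : ℕ)
        = ∑ j : Fin (3*s*b+(b-1)), (if j.val < 3*s*b then 1 else s) := by
      rw [sum_split]; simp [mul_comm]
    rw [h2]
    apply Finset.sum_le_sum
    intro j _
    by_cases hj : j.val < 3*s*b
    · rw [if_pos hj]
      rcases Bool.eq_false_or_eq_true (z j) with h | h <;> rw [h] <;> simp
      · rw [falseCount_B hb j hj]; omega
      · rw [trueCount_B hb j hj]
    · rw [if_neg hj]
      rcases Bool.eq_false_or_eq_true (z j) with h | h <;> rw [h] <;> simp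
      · rw [falseCount_D hb j (by omega)]; omega
      · rw [trueCount_D hb j (by omega)]


lemma closest_P {s b : ℕ} (hb : 0 < b) (C : Finset (Fin (4*s))) (i : Fin (4*s))
    (hi : i.val < 3*s) (hiC : i ∈ C) : closestSet (XX s b) C i = {i} := by
  ext c
  simp only [closestSet, Finset.mem_filter, Finset.mem_singleton]
  constructor
  · rintro ⟨hc, hmin⟩
    have h0 : hamming (XX s b i) (XX s b c) = 0 := by
      have := hmin i hiC
      rw [hamming_self] at this
      omega
    by_contra hne
    by_cases hcP : c.val < 3*s
    · rw [hamming_PP hb i c hi hcP (fun h => hne h.symm)] at h0; omega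
    · rw [hamming_PQ hb i c hi (by omega)] at h0; omega
  · rintro rfl
    exact ⟨hiC, fun c' hc' => by rw [hamming_self]; exact Nat.zero_le _⟩

lemma closest_Q {s b : ℕ} (hb : 0 < b) (C : Finset (Fin (4*s))) (c₀ : Fin (4*s))
    (hc₀ : c₀ ∈ C) (h3 : 3*s ≤ c₀.val) (i : Fin (4*s))
    (hi : 3*s ≤ i.val ∨ (i.val < 3*s ∧ i ∉ C)) :
    closestSet (XX s b) C i = C.filter (fun c => 3*s ≤ c.val) := by
  ext c
  simp only [closestSet, Finset.mem_filter]
  rcases hi with hiQ | ⟨hiP, hiNC⟩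
  · constructor
    · rintro ⟨hc, hmin⟩
      refine ⟨hc, ?_⟩
      have h1 := hmin c₀ hc₀
      rw [hamming_QQ i c₀ hiQ h3] at h1
      by_contra hcP
      rw [hamming_comm, hamming_PQ hb c i (by omega) hiQ] at h1
      omega
    · rintro ⟨hc, hcQ⟩
      refine ⟨hc, fun c' hc' => ?_⟩
      rw [hamming_QQ i c hiQ hcQ]
      exact Nat.zero_le _
  · have hd : ∀ c' : Fin (4*s), c' ∈ C → hamming (XX s b i) (XX s b c')
        = if 3*s ≤ c'.val then 2*b-1 else 2*b := by
      intro c' hc'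
      by_cases hq : 3*s ≤ c'.val
      · rw [if_pos hq, hamming_PQ hb i c' hiP hq]
      · rw [if_neg hq, hamming_PP hb i c' hiP (by omega)
          (fun h => hiNC (h ▸ hc'))]
    constructor
    · rintro ⟨hc, hmin⟩
      refine ⟨hc, ?_⟩
      have h1 := hmin c₀ hc₀
      rw [hd c₀ hc₀, if_pos h3, hd c hc] at h1
      by_contra hcP
      rw [if_neg hcP] at h1
      omega
    · rintro ⟨hc, hcQ⟩
      refine ⟨hc, fun c' hc' => ?_⟩
      rw [hd c hc, if_pos hcQ, hd c' hc']
      split_ifs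
      · omega
      · omega

lemma inner_sum_P {s b : ℕ} (hb : 0 < b) (C : Finset (Fin (4*s))) (c₀ : Fin (4*s))
    (hc₀ : c₀ ∈ C) (h3 : 3*s ≤ c₀.val) (i : Fin (4*s)) :
    (∑ c ∈ C.filter (fun c => c.val < 3*s),
        (if c ∈ closestSet (XX s b) C i then 1 / ((closestSet (XX s b) C i).card : ℝ) else 0))
      = if i ∈ C.filter (fun c => c.val < 3*s) then 1 else 0 := by
  by_cases hiP : i.val < 3*s ∧ i ∈ C
  · rw [closest_P hb C i hiP.1 hiP.2]
    rw [if_pos (Finset.mem_filter.2 ⟨hiP.2, hiP.1⟩)]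
    have : ∀ c : Fin (4*s), (if c ∈ ({i} : Finset (Fin (4*s)))
        then 1 / ((({i} : Finset (Fin (4*s))).card : ℝ)) else 0)
        = if c = i then (1:ℝ) else 0 := by
      intro c
      simp [Finset.mem_singleton]
    rw [Finset.sum_congr rfl (fun c _ => this c), Finset.sum_ite_eq']
    rw [if_pos (Finset.mem_filter.2 ⟨hiP.2, hiP.1⟩)]
  · have hi' : 3*s ≤ i.val ∨ (i.val < 3*s ∧ i ∉ C) := by
      by_cases h : i.val < 3*s
      · exact Or.inr ⟨h, fun hC => hiP ⟨h, hC⟩⟩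
      · exact Or.inl (by omega)
    rw [closest_Q hb C c₀ hc₀ h3 i hi']
    have hnot : i ∉ C.filter (fun c => c.val < 3*s) :=
      fun h => hiP ⟨(Finset.mem_filter.1 h).2, (Finset.mem_filter.1 h).1⟩
    rw [if_neg hnot]
    apply Finset.sum_eq_zero
    intro c hc
    rw [if_neg]
    intro hmem
    have h1 := (Finset.mem_filter.1 hc).2
    have h2 := (Finset.mem_filter.1 hmem).2
    omega

lemma inner_sum_Q {s b : ℕ} (hb : 0 < b) (C : Finset (Fin (4*s))) (c₀ : Fin (4*s))
    (hc₀ : c₀ ∈ C) (h3 : 3*s ≤ c₀.val) (i : Fin (4*s)) :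
    (∑ c ∈ C.filter (fun c => 3*s ≤ c.val),
        (if c ∈ closestSet (XX s b) C i then 1 / ((closestSet (XX s b) C i).card : ℝ) else 0))
      = if i ∈ C.filter (fun c => c.val < 3*s) then 0 else 1 := by
  by_cases hiP : i.val < 3*s ∧ i ∈ C
  · rw [closest_P hb C i hiP.1 hiP.2]
    rw [if_pos (Finset.mem_filter.2 ⟨hiP.2, hiP.1⟩)]
    apply Finset.sum_eq_zero
    intro c hc
    rw [if_neg]
    intro hmem
    have h1 := (Finset.mem_filter.1 hc).2
    have h2 := Finset.mem_singleton.1 hmem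
    subst h2
    omega
  · have hi' : 3*s ≤ i.val ∨ (i.val < 3*s ∧ i ∉ C) := by
      by_cases h : i.val < 3*s
      · exact Or.inr ⟨h, fun hC => hiP ⟨h, hC⟩⟩
      · exact Or.inl (by omega)
    rw [closest_Q hb C c₀ hc₀ h3 i hi']
    have hnot : i ∉ C.filter (fun c => c.val < 3*s) :=
      fun h => hiP ⟨(Finset.mem_filter.1 h).2, (Finset.mem_filter.1 h).1⟩
    rw [if_neg hnot]
    have hne : (C.filter (fun c => 3*s ≤ c.val)).Nonempty :=
      ⟨c₀, Finset.mem_filter.2 ⟨hc₀, h3⟩⟩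
    have hcard : ((C.filter (fun c => 3*s ≤ c.val)).card : ℝ) ≠ 0 := by
      simp only [ne_eq, Nat.cast_eq_zero, Finset.card_eq_zero]
      exact Finset.nonempty_iff_ne_empty.1 hne
    rw [Finset.sum_congr rfl (fun c hc => if_pos hc), Finset.sum_const, nsmul_eq_mul]
    field_simp

lemma wsum_P {s b : ℕ} (hb : 0 < b) (C : Finset (Fin (4*s))) (c₀ : Fin (4*s))
    (hc₀ : c₀ ∈ C) (h3 : 3*s ≤ c₀.val) :
    ∑ c ∈ C.filter (fun c => c.val < 3*s), wWeight (XX s b) C c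
      = ((C.filter (fun c => c.val < 3*s)).card : ℝ) := by
  unfold wWeight
  rw [Finset.sum_comm, Finset.sum_congr rfl (fun i _ => inner_sum_P hb C c₀ hc₀ h3 i),
    Finset.sum_ite_mem, Finset.univ_inter, Finset.sum_const, nsmul_eq_mul, mul_one]

lemma wsum_Q {s b : ℕ} (hb : 0 < b) (C : Finset (Fin (4*s))) (c₀ : Fin (4*s))
    (hc₀ : c₀ ∈ C) (h3 : 3*s ≤ c₀.val) :
    ∑ c ∈ C.filter (fun c => 3*s ≤ c.val), wWeight (XX s b) C c
      = (4*s : ℝ) - ((C.filter (fun c => c.val < 3*s)).card : ℝ) := by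
  unfold wWeight
  rw [Finset.sum_comm, Finset.sum_congr rfl (fun i _ => inner_sum_Q hb C c₀ hc₀ h3 i)]
  have h1 : ∀ i : Fin (4*s), (if i ∈ C.filter (fun c => c.val < 3*s) then (0:ℝ) else 1)
      = 1 - (if i ∈ C.filter (fun c => c.val < 3*s) then 1 else 0) := by
    intro i; split_ifs <;> ring
  rw [Finset.sum_congr rfl (fun i _ => h1 i), Finset.sum_sub_distrib,
    Finset.sum_ite_mem, Finset.univ_inter, Finset.sum_const, Finset.sum_const,
    nsmul_eq_mul, nsmul_eq_mul, mul_one, mul_one]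
  congr 1
  simp [Finset.card_univ]


lemma term_ge_B {s b : ℕ} (hb : 0 < b) (hs : 0 < s) (C : Finset (Fin (4*s)))
    (j : Fin (3*s*b+(b-1))) (hj : j.val < 3*s*b) (A B : ℝ) :
    (1:ℝ) ≤ (if A < B then (falseCount (XX s b) j : ℝ)
      else if B < A then (trueCount (XX s b) j : ℝ) else ((4*s : ℕ) : ℝ)/2) := by
  have hsR : (1:ℝ) ≤ (s:ℝ) := by exact_mod_cast hs
  split_ifs
  · rw [falseCount_B hb j hj]
    have h1 : (1:ℕ) ≤ 4*s-1 := by omega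
    exact_mod_cast h1
  · rw [trueCount_B hb j hj]; norm_num
  · push_cast; linarith

lemma sum_split_R {s b : ℕ} (a c : ℝ) :
    ∑ j : Fin (3*s*b+(b-1)), (if j.val < 3*s*b then a else c)
      = (3*s*b : ℕ) * a + ((b-1 : ℕ) : ℝ) * c := by
  rw [sum_split, nsmul_eq_mul, nsmul_eq_mul]

lemma wCost_ge_opt {s b : ℕ} (hb : 0 < b) (hs : 0 < s) (C : Finset (Fin (4*s))) :
    ((3*s*b + (b-1)*s : ℕ) : ℝ) ≤ wCost (XX s b) C := by
  have h0 : ((3*s*b + (b-1)*s : ℕ) : ℝ)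
      = ∑ j : Fin (3*s*b+(b-1)), (if j.val < 3*s*b then (1:ℝ) else (s:ℝ)) := by
    rw [sum_split_R]; push_cast; ring
  rw [h0]
  unfold wCost
  apply Finset.sum_le_sum
  intro j _
  by_cases hj : j.val < 3*s*b
  · rw [if_pos hj]
    exact term_ge_B hb hs C j hj _ _
  · rw [if_neg hj]
    have hjD : 3*s*b ≤ j.val := by omega
    have hsR : (1:ℝ) ≤ (s:ℝ) := by exact_mod_cast hs
    split_ifs
    · rw [falseCount_D hb j hjD]
      have : (s:ℝ) ≤ (3*s:ℕ) := by push_cast; linarith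
      convert this using 2
    · rw [trueCount_D hb j hjD]
    · push_cast; linarith

lemma filt_true_D {s b : ℕ} (hb : 0 < b) (C : Finset (Fin (4*s)))
    (j : Fin (3*s*b+(b-1))) (hj : 3*s*b ≤ j.val) :
    C.filter (fun c => XX s b c j = true) = C.filter (fun c => 3*s ≤ c.val) := by
  apply Finset.filter_congr
  intro c _
  have ht : 3*s ≤ j.val / b := (Nat.le_div_iff_mul_le hb).mpr hj
  unfold XX XXn
  by_cases hc : c.val < 3*s
  · rw [if_pos hc]
    simp only [decide_eq_true_eq]
    constructor
    · intro h; omega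
    · intro h; omega
  · rw [if_neg hc]
    simp only [decide_eq_true_eq]
    constructor
    · intro _; omega
    · intro _; exact hj

lemma filt_false_D {s b : ℕ} (hb : 0 < b) (C : Finset (Fin (4*s)))
    (j : Fin (3*s*b+(b-1))) (hj : 3*s*b ≤ j.val) :
    C.filter (fun c => XX s b c j = false) = C.filter (fun c => c.val < 3*s) := by
  apply Finset.filter_congr
  intro c _
  have ht : 3*s ≤ j.val / b := (Nat.le_div_iff_mul_le hb).mpr hj
  unfold XX XXn
  by_cases hc : c.val < 3*s
  · rw [if_pos hc]
    simp only [decide_eq_false_iff_not]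
    constructor
    · intro _; exact hc
    · intro _; omega
  · rw [if_neg hc]
    simp only [decide_eq_false_iff_not]
    constructor
    · intro h; exact absurd hj h
    · intro h; omega

lemma wCost_ge_A {s b : ℕ} (hb : 0 < b) (hs : 0 < s) (C : Finset (Fin (4*s)))
    (c₀ : Fin (4*s)) (hc₀ : c₀ ∈ C) (h3 : 3*s ≤ c₀.val) (hcard : 2 * C.card < 4*s) :
    ((3*s*b + (b-1)*(3*s) : ℕ) : ℝ) ≤ wCost (XX s b) C := by
  have h0 : ((3*s*b + (b-1)*(3*s) : ℕ) : ℝ)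
      = ∑ j : Fin (3*s*b+(b-1)), (if j.val < 3*s*b then (1:ℝ) else (3*s:ℝ)) := by
    rw [sum_split_R]; push_cast; ring
  rw [h0]
  unfold wCost
  apply Finset.sum_le_sum
  intro j _
  by_cases hj : j.val < 3*s*b
  · rw [if_pos hj]
    exact term_ge_B hb hs C j hj _ _
  · rw [if_neg hj]
    have hjD : 3*s*b ≤ j.val := by omega
    rw [filt_true_D hb C j hjD, filt_false_D hb C j hjD,
      wsum_P hb C c₀ hc₀ h3, wsum_Q hb C c₀ hc₀ h3]
    have hPle : (C.filter (fun c => c.val < 3*s)).card ≤ C.card :=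
      Finset.card_filter_le _ _
    have hlt : ((C.filter (fun c => c.val < 3*s)).card : ℝ)
        < (4*s : ℝ) - ((C.filter (fun c => c.val < 3*s)).card : ℝ) := by
      have h1 : 2 * (C.filter (fun c => c.val < 3*s)).card < 4*s := by omega
      have h2 : (2 * (C.filter (fun c => c.val < 3*s)).card : ℝ) < (4*s : ℝ) := by
        exact_mod_cast h1
      linarith
    rw [if_pos hlt, falseCount_D hb j hjD]
    push_cast
    exact le_refl _

lemma card_Pset (s : ℕ) :
    ((Finset.univ : Finset (Fin (4*s))).filter (fun c => c.val < 3*s)).card = 3*s := by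
  rw [card_filter_fin _ (fun x => x < 3*s)]
  have h : (Finset.range (4*s)).filter (fun x => x < 3*s) = Finset.range (3*s) := by
    ext x; simp only [Finset.mem_filter, Finset.mem_range]; omega
  rw [h, Finset.card_range]

lemma filt_powerset (s k : ℕ) :
    (Finset.powersetCard k (Finset.univ : Finset (Fin (4*s)))).filter
      (fun C => C ⊆ Finset.univ.filter (fun c => c.val < 3*s))
    = Finset.powersetCard k (Finset.univ.filter (fun c => c.val < 3*s)) := by
  ext D
  simp only [Finset.mem_filter, Finset.mem_powersetCard]
  constructor
  · rintro ⟨⟨_, h2⟩, h3⟩; exact ⟨h3, h2⟩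
  · rintro ⟨h1, h2⟩; exact ⟨⟨Finset.subset_univ D, h2⟩, h1⟩

lemma choose_ineq (s : ℕ) : ∀ k, 4^k * Nat.choose (3*s) k ≤ 3^k * Nat.choose (4*s) k := by
  intro k
  induction k with
  | zero => simp
  | succ k ih =>
    have h1 := Nat.choose_succ_right_eq (3*s) k
    have h2 := Nat.choose_succ_right_eq (4*s) k
    have key : 4^(k+1) * Nat.choose (3*s) (k+1) * (k+1)
        ≤ 3^(k+1) * Nat.choose (4*s) (k+1) * (k+1) := by
      calc 4^(k+1) * Nat.choose (3*s) (k+1) * (k+1)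
          = (4^k * Nat.choose (3*s) k) * (4*(3*s-k)) := by
            rw [mul_assoc, h1, pow_succ]; ring
        _ ≤ (3^k * Nat.choose (4*s) k) * (3*(4*s-k)) :=
            Nat.mul_le_mul ih (by omega)
        _ = 3^(k+1) * Nat.choose (4*s) (k+1) * (k+1) := by
            rw [mul_assoc (3^(k+1)), h2, pow_succ]; ring
    exact Nat.le_of_mul_le_mul_right key (Nat.succ_pos k)

lemma total_sum {s b k : ℕ} (hb : 0 < b) (hs : 0 < s) (hk2s : k < 2*s) :
    ((Nat.choose (3*s) k : ℝ) * ((3*s*b+(b-1)*s : ℕ) : ℝ)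
      + ((Nat.choose (4*s) k : ℝ) - (Nat.choose (3*s) k : ℝ)) * ((3*s*b+(b-1)*(3*s) : ℕ) : ℝ))
    ≤ ∑ C ∈ Finset.powersetCard k (Finset.univ : Finset (Fin (4*s))), wCost (XX s b) C := by
  have step1 : ∀ C ∈ Finset.powersetCard k (Finset.univ : Finset (Fin (4*s))),
      (if C ⊆ Finset.univ.filter (fun c => c.val < 3*s)
        then ((3*s*b+(b-1)*s : ℕ) : ℝ) else ((3*s*b+(b-1)*(3*s) : ℕ) : ℝ))
      ≤ wCost (XX s b) C := by
    intro C hC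
    split_ifs with hsub
    · exact wCost_ge_opt hb hs C
    · obtain ⟨c₀, hc₀C, hc₀⟩ := Finset.not_subset.1 hsub
      have h3 : 3*s ≤ c₀.val := by
        by_contra h
        exact hc₀ (Finset.mem_filter.2 ⟨Finset.mem_univ _, by omega⟩)
      have hcard : 2 * C.card < 4*s := by
        have := (Finset.mem_powersetCard.1 hC).2
        omega
      exact wCost_ge_A hb hs C c₀ hc₀C h3 hcard
  refine le_trans (le_of_eq ?_) (Finset.sum_le_sum step1)
  rw [Finset.sum_ite, Finset.sum_const, Finset.sum_const, filt_powerset,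
    Finset.card_powersetCard, card_Pset]
  have hcards : ((Finset.powersetCard k (Finset.univ : Finset (Fin (4*s)))).filter
      (fun C => ¬ C ⊆ Finset.univ.filter (fun c => c.val < 3*s))).card
      = Nat.choose (4*s) k - Nat.choose (3*s) k := by
    have h := Finset.card_filter_add_card_filter_not
      (s := Finset.powersetCard k (Finset.univ : Finset (Fin (4*s))))
      (p := fun C => C ⊆ Finset.univ.filter (fun c => c.val < 3*s))
    rw [filt_powerset, Finset.card_powersetCard, card_Pset, Finset.card_powersetCard,
      Finset.card_univ, Fintype.card_fin] at h
    omega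
  rw [hcards, nsmul_eq_mul, nsmul_eq_mul]
  have hle : Nat.choose (3*s) k ≤ Nat.choose (4*s) k :=
    Nat.choose_le_choose k (by omega)
  rw [Nat.cast_sub hle]


lemma alg1 (T Np A O β : ℝ) (hNpβ : Np ≤ β*T) (hAO : O ≤ A) :
    T*A - β*T*(A-O) ≤ Np*O + (T-Np)*A := by
  have h := mul_nonneg (sub_nonneg.2 hNpβ) (sub_nonneg.2 hAO)
  nlinarith [h]

lemma alg2 (x y β ε : ℝ)
    (h2b : x*((3:ℝ)/2)*(1-β) < x*(ε*(4*y-1))) :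
    (3/2 - (1/2)*β - ε) * (4*x*y - x)
      < (6*x*y-3*x) - β*((6*x*y-3*x)-(4*x*y-x)) := by
  nlinarith [h2b]

theorem main_bound' (k s b : ℕ) (hk : 1 ≤ k) (hs : 0 < s) (hb2 : 2 ≤ b)
    (hk2s : k < 2*s) (hk4s : k ≤ 4*s) (ε : ℝ) (hε : 0 < ε)
    (hεb : (3:ℝ)/2 ≤ ε * (4*(b:ℝ) - 1)) :
    3 / 2 - (1 / 2) * (3 / 4 : ℝ) ^ k - ε
      < ratio (wSortitionCost k (XX s b)) (optCost (XX s b)) := by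
  have hb : 0 < b := by omega
  have hOX : optCost (XX s b) = 3*s*b+(b-1)*s := optCost_XX hb hs
  have hOnz : 3*s*b+(b-1)*s ≠ 0 := by positivity
  rw [ratio, hOX, if_neg hOnz]
  have hsR1 : (1:ℝ) ≤ (s:ℝ) := by exact_mod_cast hs
  have hbR2 : (2:ℝ) ≤ (b:ℝ) := by exact_mod_cast hb2
  have hOr : ((3*s*b+(b-1)*s : ℕ) : ℝ) = 4*(s:ℝ)*(b:ℝ) - (s:ℝ) := by
    push_cast [Nat.cast_sub (by omega : 1 ≤ b)]
    ring
  have hAr : ((3*s*b+(b-1)*(3*s) : ℕ) : ℝ) = 6*(s:ℝ)*(b:ℝ) - 3*(s:ℝ) := by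
    push_cast [Nat.cast_sub (by omega : 1 ≤ b)]
    ring
  have hT : (0:ℝ) < (Nat.choose (4*s) k : ℝ) := by
    exact_mod_cast Nat.choose_pos hk4s
  have hNp0 : (0:ℝ) ≤ (Nat.choose (3*s) k : ℝ) := by positivity
  have hβpos : (0:ℝ) < (3/4:ℝ)^k := by positivity
  have hβlt : (3/4:ℝ)^k < 1 := pow_lt_one₀ (by norm_num) (by norm_num) (by omega)
  have hNpβ : (Nat.choose (3*s) k : ℝ) ≤ (3/4:ℝ)^k * (Nat.choose (4*s) k : ℝ) := by
    have h := choose_ineq s k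
    have hR : (4:ℝ)^k * (Nat.choose (3*s) k : ℝ) ≤ (3:ℝ)^k * (Nat.choose (4*s) k : ℝ) := by
      exact_mod_cast h
    have h4 : (0:ℝ) < 4^k := by positivity
    rw [div_pow, div_mul_eq_mul_div, le_div_iff₀ h4]
    calc (Nat.choose (3*s) k : ℝ) * 4^k = 4^k * (Nat.choose (3*s) k : ℝ) := by ring
      _ ≤ 3^k * (Nat.choose (4*s) k : ℝ) := hR
  have hAO : ((3*s*b+(b-1)*s : ℕ) : ℝ) ≤ ((3*s*b+(b-1)*(3*s) : ℕ) : ℝ) := by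
    rw [hOr, hAr]; nlinarith
  have hOpos : (0:ℝ) < ((3*s*b+(b-1)*s : ℕ) : ℝ) := by
    rw [hOr]; nlinarith
  have h2b : (s:ℝ) * ((3:ℝ)/2) * (1-(3/4:ℝ)^k) < (s:ℝ) * (ε * (4*(b:ℝ)-1)) := by
    have hA1 : (3:ℝ)/2 * (1-(3/4:ℝ)^k) < 3/2 := by nlinarith
    have hspos : (0:ℝ) < (s:ℝ) := by linarith
    calc (s:ℝ) * ((3:ℝ)/2) * (1-(3/4:ℝ)^k) = (s:ℝ) * ((3:ℝ)/2 * (1-(3/4:ℝ)^k)) := by ring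
      _ < (s:ℝ) * ((3:ℝ)/2) := by exact mul_lt_mul_of_pos_left hA1 hspos
      _ ≤ (s:ℝ) * (ε * (4*(b:ℝ)-1)) := by
          exact mul_le_mul_of_nonneg_left hεb (le_of_lt hspos)
  have h2 : (3/2 - (1/2)*(3/4:ℝ)^k - ε) * ((3*s*b+(b-1)*s : ℕ) : ℝ)
      < ((3*s*b+(b-1)*(3*s) : ℕ) : ℝ)
        - (3/4:ℝ)^k * (((3*s*b+(b-1)*(3*s) : ℕ) : ℝ) - ((3*s*b+(b-1)*s : ℕ) : ℝ)) := by
    rw [hOr, hAr]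
    exact alg2 _ _ _ _ h2b
  have h1 : (Nat.choose (4*s) k : ℝ) * ((3*s*b+(b-1)*(3*s) : ℕ) : ℝ)
        - (3/4:ℝ)^k * (Nat.choose (4*s) k : ℝ)
          * (((3*s*b+(b-1)*(3*s) : ℕ) : ℝ) - ((3*s*b+(b-1)*s : ℕ) : ℝ))
      ≤ (Nat.choose (3*s) k : ℝ) * ((3*s*b+(b-1)*s : ℕ) : ℝ)
        + ((Nat.choose (4*s) k : ℝ) - (Nat.choose (3*s) k : ℝ))
          * ((3*s*b+(b-1)*(3*s) : ℕ) : ℝ) := by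
    exact alg1 _ _ _ _ _ hNpβ hAO
  have hL : (3/2 - (1/2)*(3/4:ℝ)^k - ε)
        * ((Nat.choose (4*s) k : ℝ) * ((3*s*b+(b-1)*s : ℕ) : ℝ))
      < (Nat.choose (3*s) k : ℝ) * ((3*s*b+(b-1)*s : ℕ) : ℝ)
        + ((Nat.choose (4*s) k : ℝ) - (Nat.choose (3*s) k : ℝ))
          * ((3*s*b+(b-1)*(3*s) : ℕ) : ℝ) := by
    have hmul := mul_lt_mul_of_pos_left h2 hT
    calc (3/2 - (1/2)*(3/4:ℝ)^k - ε)
          * ((Nat.choose (4*s) k : ℝ) * ((3*s*b+(b-1)*s : ℕ) : ℝ))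
        = (Nat.choose (4*s) k : ℝ) * ((3/2 - (1/2)*(3/4:ℝ)^k - ε)
            * ((3*s*b+(b-1)*s : ℕ) : ℝ)) := by ring
      _ < (Nat.choose (4*s) k : ℝ) * (((3*s*b+(b-1)*(3*s) : ℕ) : ℝ)
            - (3/4:ℝ)^k * (((3*s*b+(b-1)*(3*s) : ℕ) : ℝ)
              - ((3*s*b+(b-1)*s : ℕ) : ℝ))) := hmul
      _ = (Nat.choose (4*s) k : ℝ) * ((3*s*b+(b-1)*(3*s) : ℕ) : ℝ)
            - (3/4:ℝ)^k * (Nat.choose (4*s) k : ℝ)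
              * (((3*s*b+(b-1)*(3*s) : ℕ) : ℝ) - ((3*s*b+(b-1)*s : ℕ) : ℝ)) := by ring
      _ ≤ _ := h1
  have hS := total_sum (k := k) hb hs hk2s
  have hTO : (0:ℝ) < (Nat.choose (4*s) k : ℝ) * ((3*s*b+(b-1)*s : ℕ) : ℝ) :=
    mul_pos hT hOpos
  have hfinal : 3/2 - (1/2)*(3/4:ℝ)^k - ε
      < (∑ C ∈ Finset.powersetCard k (Finset.univ : Finset (Fin (4*s))), wCost (XX s b) C)
        / ((Nat.choose (4*s) k : ℝ) * ((3*s*b+(b-1)*s : ℕ) : ℝ)) := by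
    rw [lt_div_iff₀ hTO]
    exact lt_of_lt_of_le hL (le_trans (le_of_eq (by ring)) hS)
  unfold wSortitionCost
  rw [div_div]
  exact hfinal

theorem stmt15' (k : ℕ) (hk : 1 ≤ k) :
    (∀ ε : ℝ, 0 < ε → ∃ (n m : ℕ) (X : Fin n → Fin m → Bool),
      3 / 2 - (1 / 2) * (3 / 4 : ℝ) ^ k - ε < ratio (wSortitionCost k X) (optCost X)) ∧
    (9 / 8 : ℝ) ≤ 3 / 2 - (1 / 2) * (3 / 4 : ℝ) ^ k := by
  constructor
  · intro ε hε
    refine ⟨4*(k+1), 3*(k+1)*(max 2 ⌈(3:ℝ)/ε⌉₊)+((max 2 ⌈(3:ℝ)/ε⌉₊)-1),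
      XX (k+1) (max 2 ⌈(3:ℝ)/ε⌉₊), ?_⟩
    have hb2 : 2 ≤ max 2 ⌈(3:ℝ)/ε⌉₊ := le_max_left _ _
    have hεb : (3:ℝ)/2 ≤ ε * (4*((max 2 ⌈(3:ℝ)/ε⌉₊ : ℕ):ℝ) - 1) := by
      have hceil : ((3:ℝ)/ε) ≤ ((max 2 ⌈(3:ℝ)/ε⌉₊ : ℕ):ℝ) := by
        calc (3:ℝ)/ε ≤ (⌈(3:ℝ)/ε⌉₊ : ℝ) := Nat.le_ceil _
          _ ≤ _ := by exact_mod_cast le_max_right 2 _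
      have h3b : (3:ℝ) ≤ ε * ((max 2 ⌈(3:ℝ)/ε⌉₊ : ℕ):ℝ) := by
        rw [div_le_iff₀ hε] at hceil
        linarith
      have hbb : (2:ℝ) ≤ ((max 2 ⌈(3:ℝ)/ε⌉₊ : ℕ):ℝ) := by exact_mod_cast hb2
      have hmono : ε * ((max 2 ⌈(3:ℝ)/ε⌉₊ : ℕ):ℝ)
          ≤ ε * (4*((max 2 ⌈(3:ℝ)/ε⌉₊ : ℕ):ℝ) - 1) := by
        apply mul_le_mul_of_nonneg_left _ (le_of_lt hε)
        linarith
      linarith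
    exact main_bound' k (k+1) _ hk (by omega) hb2 (by omega) (by omega) ε hε hεb
  · have h1 : (3/4:ℝ)^k ≤ 3/4 := by
      calc (3/4:ℝ)^k ≤ (3/4:ℝ)^1 := pow_le_pow_of_le_one (by norm_num) (by norm_num) hk
        _ = 3/4 := pow_one _
    linarith

theorem stmt15 (k : ℕ) (hk : 1 ≤ k) :
    (∀ ε : ℝ, 0 < ε → ∃ (n m : ℕ) (X : Fin n → Fin m → Bool),
      3 / 2 - (1 / 2) * (3 / 4 : ℝ) ^ k - ε < ratio (wSortitionCost k X) (optCost X)) ∧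
    (9 / 8 : ℝ) ≤ 3 / 2 - (1 / 2) * (3 / 4 : ℝ) ^ k := stmt15' k hk

end
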